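/- arXiv:2210.11008 — 4 statements merged into one kernel-verified Lean document; each statement's English description precedes it below -/
import Mathlib

section
/- Let Ω be a locally compact Hausdorff space with countable base, 0 < q < 1, σ a locally finite Radon measure on Ω, and G a kernel on Ω satisfying the weak maximum principle with constant 𝔟. Then there exists a positive constant C₁ = C₁(q,𝔟) such that C₁ ‖Gσ‖_{L^{q/(1−q)}(Ω,σ)} ≤ ϰ, where ϰ is the least constant C in the inequality ‖Gν‖_{L^q(Ω,σ)} ≤ C‖ν‖ over all finite Radon measures ν on Ω. -/
open MeasureTheory ENNReal Set

noncomputable section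

namespace NPE

variable {Ω : Type*} [TopologicalSpace Ω] [MeasurableSpace Ω]

/-- The potential `Gμ(x) = ∫_Ω G(x,y) dμ(y)`. -/
def pot (G : Ω → Ω → ℝ≥0∞) (μ : Measure Ω) (x : Ω) : ℝ≥0∞ :=
  ∫⁻ y, G x y ∂μ

/-- The potential `G(f dσ)(x) = ∫_Ω G(x,y) f(y) dσ(y)`. -/
def potF (G : Ω → Ω → ℝ≥0∞) (σ : Measure Ω) (f : Ω → ℝ≥0∞) (x : Ω) : ℝ≥0∞ :=
  ∫⁻ y, G x y * f y ∂σ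

/-- A kernel on `Ω` is a lower semicontinuous function `Ω × Ω → [0,∞]`. -/
def IsKernel (G : Ω → Ω → ℝ≥0∞) : Prop :=
  LowerSemicontinuous (fun p : Ω × Ω => G p.1 p.2)

/-- A quasi-metric kernel with quasi-metric constant `κ ≥ 1/2`: positive, symmetric and
`d := 1/G` satisfies the quasi-triangle inequality. -/
def IsQuasiMetricKernel (G : Ω → Ω → ℝ≥0∞) (κ : ℝ) : Prop :=
  IsKernel G ∧ (1 / 2 : ℝ) ≤ κ ∧ (∀ x y, 0 < G x y) ∧ (∀ x y, G x y = G y x) ∧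
    ∀ x y z, (G x y)⁻¹ ≤ ENNReal.ofReal κ * ((G x z)⁻¹ + (G z y)⁻¹)

/-- The closed support of a measure. -/
def msupp (μ : Measure Ω) : Set Ω :=
  {x | ∀ U : Set Ω, IsOpen U → x ∈ U → 0 < μ U}

/-- The weak maximum principle with constant `b ≥ 1`. -/
def WMP (G : Ω → Ω → ℝ≥0∞) (b : ℝ) : Prop :=
  1 ≤ b ∧ ∀ μ : Measure Ω, IsLocallyFiniteMeasure μ →
    (∀ x ∈ msupp μ, pot G μ x ≤ 1) → ∀ x, pot G μ x ≤ ENNReal.ofReal b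

/-- Quasi-symmetry with constant `a ≥ 1`. -/
def QS (G : Ω → Ω → ℝ≥0∞) (a : ℝ) : Prop :=
  1 ≤ a ∧ ∀ x y, (ENNReal.ofReal a)⁻¹ * G y x ≤ G x y ∧ G x y ≤ ENNReal.ofReal a * G y x

/-- The `L^q` quasi-norm of a nonnegative function with respect to `σ`. -/
def lqNorm (q : ℝ) (σ : Measure Ω) (f : Ω → ℝ≥0∞) : ℝ≥0∞ :=
  (∫⁻ x, f x ^ q ∂σ) ^ (1 / q)

/-- The least constant `ϰ` in the `(1,q)` weighted norm inequality
`‖Gν‖_{L^q(σ)} ≤ C ‖ν‖` over all finite Radon measures `ν`. -/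
def kappa (G : Ω → Ω → ℝ≥0∞) (q : ℝ) (σ : Measure Ω) : ℝ≥0∞ :=
  sInf {C : ℝ≥0∞ | ∀ ν : Measure Ω, IsFiniteMeasure ν →
    lqNorm q σ (pot G ν) ≤ C * ν Set.univ}

/-- The ball `B(x,r) = {y : G(x,y) > 1/r}`, i.e. `{y : d(x,y) < r}` with `d = 1/G`. -/
def ball (G : Ω → Ω → ℝ≥0∞) (x : Ω) (r : ℝ) : Set Ω :=
  {y | (G x y)⁻¹ < ENNReal.ofReal r}

/-- The intrinsic nonlinear potential
`Kσ(x) = ∫_0^∞ ϰ(B(x,r))^{q/(1-q)} r⁻² dr`. -/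
def kpot (G : Ω → Ω → ℝ≥0∞) (q : ℝ) (σ : Measure Ω) (x : Ω) : ℝ≥0∞ :=
  ∫⁻ r in Set.Ioi (0 : ℝ),
    kappa G q (σ.restrict (ball G x r)) ^ (q / (1 - q)) / ENNReal.ofReal (r ^ 2)

/-- A nontrivial super-solution of `u = G(u^q dσ) + d`:
`u > 0` σ-a.e. and `G(u^q dσ) + d ≤ u < ∞` σ-a.e. -/
def IsSupSol (G : Ω → Ω → ℝ≥0∞) (σ : Measure Ω) (q : ℝ) (d : Ω → ℝ≥0∞)
    (u : Ω → ℝ≥0∞) : Prop :=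
  Measurable u ∧ (∀ᵐ x ∂σ, 0 < u x) ∧
    ∀ᵐ x ∂σ, potF G σ (fun y => u y ^ q) x + d x ≤ u x ∧ u x < ∞

/-- A sub-solution: `u ≤ G(u^q dσ) + d < ∞` σ-a.e. -/
def IsSubSol (G : Ω → Ω → ℝ≥0∞) (σ : Measure Ω) (q : ℝ) (d : Ω → ℝ≥0∞)
    (u : Ω → ℝ≥0∞) : Prop :=
  Measurable u ∧
    ∀ᵐ x ∂σ, u x ≤ potF G σ (fun y => u y ^ q) x + d x ∧
      potF G σ (fun y => u y ^ q) x + d x < ∞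

/-- A nontrivial solution: `u > 0` σ-a.e. and `u = G(u^q dσ) + d`, `u < ∞`, σ-a.e. -/
def IsSol (G : Ω → Ω → ℝ≥0∞) (σ : Measure Ω) (q : ℝ) (d : Ω → ℝ≥0∞)
    (u : Ω → ℝ≥0∞) : Prop :=
  Measurable u ∧ (∀ᵐ x ∂σ, 0 < u x) ∧
    ∀ᵐ x ∂σ, u x = potF G σ (fun y => u y ^ q) x + d x ∧ u x < ∞

/-- The growth conditions `∫_a^∞ σ(B(x₀,r)) r⁻² dr < ∞`,
`∫_a^∞ ϰ(B(x₀,r))^{q/(1-q)} r⁻² dr < ∞` and `∫_a^∞ μ(B(x₀,r)) r⁻² dr < ∞`. -/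
def growthConds (G : Ω → Ω → ℝ≥0∞) (q : ℝ) (σ μ : Measure Ω) (x₀ : Ω) (a : ℝ) : Prop :=
  (∫⁻ r in Set.Ioi a, σ (ball G x₀ r) / ENNReal.ofReal (r ^ 2)) < ∞ ∧
  (∫⁻ r in Set.Ioi a,
      kappa G q (σ.restrict (ball G x₀ r)) ^ (q / (1 - q)) / ENNReal.ofReal (r ^ 2)) < ∞ ∧
  (∫⁻ r in Set.Ioi a, μ (ball G x₀ r) / ENNReal.ofReal (r ^ 2)) < ∞

/-- The modified kernel `G̃(x,y) = G(x,y)/(m(x)m(y))`. -/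
def modKer (G : Ω → Ω → ℝ≥0∞) (m : Ω → ℝ) : Ω → Ω → ℝ≥0∞ :=
  fun x y => G x y / (ENNReal.ofReal (m x) * ENNReal.ofReal (m y))

/-- The modified measure `dσ̃ = m^{1+q} dσ`. -/
def modMeas (σ : Measure Ω) (m : Ω → ℝ) (q : ℝ) : Measure Ω :=
  σ.withDensity fun x => ENNReal.ofReal (m x) ^ ((1 : ℝ) + q)


/-- The potential of a kernel is lower semicontinuous. -/
theorem lsc_pot [FirstCountableTopology Ω]
    {G : Ω → Ω → ℝ≥0∞} (hG : IsKernel G)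
    (hGm : Measurable fun p : Ω × Ω => G p.1 p.2) (μ : Measure Ω) :
    LowerSemicontinuous (pot G μ) := by
  intro x c hc
  by_contra h
  rw [Filter.not_eventually] at h
  obtain ⟨u, hu, hup⟩ := Filter.exists_seq_forall_of_frequently h
  have hmeas : ∀ k : ℕ, Measurable fun y => G (u k) y :=
    fun k => hGm.comp measurable_prodMk_left
  have key : pot G μ x ≤ Filter.liminf (fun k => pot G μ (u k)) Filter.atTop := by
    refine le_trans (lintegral_mono fun y => ?_) (lintegral_liminf_le hmeas)
    refine le_of_forall_lt fun d hd => ?_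
    obtain ⟨d', hdd', hd'⟩ := exists_between hd
    have hl := hG (x, y) d' hd'
    have htend : Filter.Tendsto (fun k => ((u k), y)) Filter.atTop (nhds (x, y)) :=
      hu.prodMk_nhds tendsto_const_nhds
    have hev : ∀ᶠ k in Filter.atTop, d' < G (u k) y := htend.eventually hl
    exact lt_of_lt_of_le hdd'
      (Filter.le_liminf_of_le (by isBoundedDefault) (hev.mono fun k hk => hk.le))
  have hle : pot G μ x ≤ c :=
    key.trans (Filter.liminf_le_of_frequently_le'
      ((Filter.Eventually.of_forall fun k => not_lt.1 (hup k)).frequently))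
  exact absurd hc (not_lt.2 hle)

/-- For a kernel satisfying the weak maximum principle with constant `𝔟`,
`C₁ ‖Gσ‖_{L^{q/(1-q)}(σ)} ≤ ϰ` for some positive constant `C₁ = C₁(q,𝔟)`. -/
theorem statement2 [LocallyCompactSpace Ω] [T2Space Ω] [SecondCountableTopology Ω]
    [BorelSpace Ω] (G : Ω → Ω → ℝ≥0∞) (q b : ℝ) (hq0 : 0 < q) (hq1 : q < 1)
    (σ : Measure Ω) [IsLocallyFiniteMeasure σ] (hGk : IsKernel G) (hWMP : WMP G b) :
    ∃ C₁ : ℝ, 0 < C₁ ∧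
      ENNReal.ofReal C₁ * lqNorm (q / (1 - q)) σ (pot G σ) ≤ kappa G q σ := by
  classical
  obtain ⟨hb1, hwmp⟩ := hWMP
  have hq1' : (0:ℝ) < 1 - q := by linarith
  set γ : ℝ := q / (1 - q) with hγdef
  have hγ : 0 < γ := div_pos hq0 hq1'
  set bb : ℝ≥0∞ := ENNReal.ofReal b with hbhat
  have hbb1 : (1:ℝ≥0∞) ≤ bb := by
    rw [hbhat, ← ENNReal.ofReal_one]
    exact ENNReal.ofReal_le_ofReal hb1
  have hbbtop : bb ≠ ∞ := ENNReal.ofReal_ne_top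
  have hbb0 : bb ≠ 0 := by
    intro h; rw [h] at hbb1; exact (not_le.2 zero_lt_one) hbb1
  have h2bb0 : (2 * bb) ≠ 0 := by simp [hbb0]
  have h2bbtop : (2 * bb) ≠ ∞ := ENNReal.mul_ne_top (by norm_num) hbbtop
  have hDγ0 : ((2 * bb) ^ γ) ≠ 0 :=
    (ENNReal.rpow_pos (by simp [pos_iff_ne_zero, hbb0]) h2bbtop).ne'
  have hDγtop : ((2 * bb) ^ γ) ≠ ∞ := ENNReal.rpow_ne_top_of_nonneg hγ.le h2bbtop
  set c₀ : ℝ≥0∞ := (2 * (2 * bb) ^ γ)⁻¹ with hc₀def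
  have hc₀0 : c₀ ≠ 0 := ENNReal.inv_ne_zero.2 (ENNReal.mul_ne_top (by norm_num) hDγtop)
  have hc₀top : c₀ ≠ ∞ := ENNReal.inv_ne_top.2 (by simp [hDγ0])
  refine ⟨c₀.toReal, ENNReal.toReal_pos hc₀0 hc₀top, ?_⟩
  rw [ENNReal.ofReal_toReal hc₀top]
  -- measurability of the kernel
  have hGm : Measurable fun p : Ω × Ω => G p.1 p.2 := hGk.measurable
  have hGx : ∀ x, Measurable fun y => G x y := fun x => hGm.comp measurable_prodMk_left
  -- exhaustion of σ
  set Kn : ℕ → Set Ω := spanningSets σ with hKn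
  have hKmeas : ∀ n, MeasurableSet (Kn n) := measurableSet_spanningSets σ
  have hKmono : Monotone Kn := monotone_spanningSets σ
  have hKfin : ∀ n, σ (Kn n) < ∞ := measure_spanningSets_lt_top σ
  have hKunion : ⋃ n, Kn n = univ := iUnion_spanningSets σ
  set σn : ℕ → Measure Ω := fun n => σ.restrict (Kn n) with hσn
  have hσnfin : ∀ n, IsFiniteMeasure (σn n) := fun n =>
    ⟨by rw [hσn, Measure.restrict_apply_univ]; exact hKfin n⟩
  set F : ℕ → Ω → ℝ≥0∞ := fun n x => pot G (σn n) x with hF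
  have hFmeas : ∀ n, Measurable (F n) := by
    intro n
    haveI := hσnfin n
    exact Measurable.lintegral_prod_right' (ν := σn n) hGm
  have hFlsc : ∀ n, LowerSemicontinuous (F n) := fun n => lsc_pot hGk hGm (σn n)
  have hFle : ∀ n x, F n x ≤ pot G σ x := fun n x =>
    lintegral_mono' Measure.restrict_le_self le_rfl
  have hFmono : ∀ x, Monotone fun n => F n x := fun x i j hij =>
    lintegral_mono' (Measure.restrict_mono (hKmono hij) le_rfl) le_rfl
  set m : ℕ → Ω → ℝ≥0∞ := fun n x => min (F n x) n with hm
  have hmmeas : ∀ n, Measurable (m n) := fun n => (hFmeas n).min measurable_const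
  have hmg_meas : ∀ n, Measurable fun x => m n x ^ γ := fun n =>
    ENNReal.continuous_rpow_const.measurable.comp (hmmeas n)
  have hmF : ∀ n x, m n x ≤ F n x := fun n x => min_le_left _ _
  have hmn : ∀ n x, m n x ≤ (n : ℝ≥0∞) := fun n x => min_le_right _ _
  have hmtop : ∀ n x, m n x ≠ ∞ := fun n x =>
    ((hmn n x).trans_lt (ENNReal.natCast_lt_top n)).ne
  set ν : ℕ → Measure Ω := fun n => (σn n).withDensity fun y => m n y ^ γ with hν
  set B : ℕ → ℝ≥0∞ := fun n => ∫⁻ x, m n x ^ γ ∂σ with hB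
  have hνuniv : ∀ n, (ν n) univ = ∫⁻ y, m n y ^ γ ∂(σn n) := fun n => by
    rw [hν, withDensity_apply _ MeasurableSet.univ, Measure.restrict_univ]
  have hνfin : ∀ n, (ν n) univ < ∞ := by
    intro n
    rw [hνuniv n]
    calc (∫⁻ y, m n y ^ γ ∂(σn n))
        ≤ ∫⁻ _, (n : ℝ≥0∞) ^ γ ∂(σn n) :=
          lintegral_mono fun y => ENNReal.rpow_le_rpow (hmn n y) hγ.le
      _ = (n : ℝ≥0∞) ^ γ * (σn n) univ := lintegral_const _
      _ < ∞ := ENNReal.mul_lt_top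
          (ENNReal.rpow_ne_top_of_nonneg hγ.le (ENNReal.natCast_ne_top n)).lt_top
          ((hσnfin n).measure_univ_lt_top)
  -- the key pointwise estimate via the weak maximum principle
  have hkey : ∀ n x, c₀ * m n x ^ (1 + γ) ≤ pot G (ν n) x := by
    intro n x
    rcases eq_or_ne (m n x) 0 with hm0 | hm0
    · simp [hm0, ENNReal.zero_rpow_of_pos (by positivity : (0:ℝ) < 1 + γ)]
    set t : ℝ≥0∞ := m n x / (2 * bb) with ht
    have ht0 : t ≠ 0 := by
      rw [ht]
      simp [ENNReal.div_eq_zero_iff, hm0, h2bbtop]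
    have httop : t ≠ ∞ := by
      rw [ht]
      exact (ENNReal.div_lt_top (hmtop n x) h2bb0).ne
    set S : Set Ω := {y | F n y ≤ t} with hS
    have hSclosed : IsClosed S := by
      have hopen : IsOpen {y | t < F n y} :=
        lowerSemicontinuous_iff_isOpen_preimage.1 (hFlsc n) t
      have : S = {y | t < F n y}ᶜ := by ext y; simp [hS, not_lt]
      rw [this]; exact hopen.isClosed_compl
    have hSmeas : MeasurableSet S := hSclosed.measurableSet
    -- WMP bound for the restricted potential
    have hbound : pot G ((σn n).restrict S) x ≤ bb * t := by
      set μ' : Measure Ω := t⁻¹ • ((σn n).restrict S) with hμ'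
      have hpotμ' : ∀ z, pot G μ' z = t⁻¹ * pot G ((σn n).restrict S) z := fun z => by
        rw [hμ', pot, lintegral_smul_measure]; rfl
      haveI hμ'fin : IsFiniteMeasure μ' := by
        constructor
        rw [hμ', Measure.smul_apply, smul_eq_mul]
        haveI := hσnfin n
        exact ENNReal.mul_lt_top (ENNReal.inv_ne_top.2 ht0).lt_top
          (measure_lt_top ((σn n).restrict S) univ)
      have hsupp : ∀ z ∈ msupp μ', pot G μ' z ≤ 1 := by
        intro z hz
        have hzS : z ∈ S := by
          by_contra hzS
          have h0 : μ' Sᶜ = 0 := by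
            rw [hμ', Measure.smul_apply, smul_eq_mul,
              Measure.restrict_apply hSmeas.compl, compl_inter_self]
            simp
          have := hz Sᶜ hSclosed.isOpen_compl hzS
          rw [h0] at this
          exact lt_irrefl 0 this
        rw [hpotμ' z]
        calc t⁻¹ * pot G ((σn n).restrict S) z
            ≤ t⁻¹ * F n z :=
              mul_le_mul_right (lintegral_mono' Measure.restrict_le_self le_rfl) _
          _ ≤ t⁻¹ * t := mul_le_mul_right hzS _
          _ = 1 := ENNReal.inv_mul_cancel ht0 httop
      have hwb := hwmp μ' inferInstance hsupp x
      rw [hpotμ' x] at hwb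
      calc pot G ((σn n).restrict S) x
          = t * (t⁻¹ * pot G ((σn n).restrict S) x) := by
            rw [← mul_assoc, ENNReal.mul_inv_cancel ht0 httop, one_mul]
        _ ≤ t * bb := mul_le_mul_right hwb t
        _ = bb * t := mul_comm _ _
    have hbt : bb * t = m n x / 2 := by
      rw [ht, div_eq_mul_inv, div_eq_mul_inv,
        ENNReal.mul_inv (Or.inl (by norm_num)) (Or.inl (by norm_num))]
      calc bb * (m n x * (2⁻¹ * bb⁻¹)) = m n x * 2⁻¹ * (bb * bb⁻¹) := by ring
        _ = m n x * 2⁻¹ := by rw [ENNReal.mul_inv_cancel hbb0 hbbtop, mul_one]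
    -- lower bound on the tail integral
    have hQ : m n x / 2 ≤ ∫⁻ y in Sᶜ, G x y ∂(σn n) := by
      have hdec : (∫⁻ y in S, G x y ∂(σn n)) + ∫⁻ y in Sᶜ, G x y ∂(σn n) = F n x :=
        lintegral_add_compl _ hSmeas
      have h1 : m n x / 2 + m n x / 2 ≤ m n x / 2 + ∫⁻ y in Sᶜ, G x y ∂(σn n) := by
        rw [ENNReal.add_halves]
        calc m n x ≤ F n x := hmF n x
          _ = (∫⁻ y in S, G x y ∂(σn n)) + ∫⁻ y in Sᶜ, G x y ∂(σn n) := hdec.symm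
          _ ≤ m n x / 2 + ∫⁻ y in Sᶜ, G x y ∂(σn n) :=
              add_le_add_left (hbound.trans_eq hbt) _
      exact (ENNReal.add_le_add_iff_left (by
        exact (ENNReal.div_lt_top (hmtop n x) (by norm_num)).ne)).1 h1
    -- t ≤ m n y on Sᶜ
    have ht_le_m : t ≤ m n x := by
      rw [ht, div_eq_mul_inv]
      calc m n x * (2 * bb)⁻¹ ≤ m n x * 1 :=
            mul_le_mul_right (ENNReal.inv_le_one.2 (le_trans one_le_two
              (le_mul_of_one_le_right zero_le hbb1))) _
        _ = m n x := mul_one _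
    have htm : ∀ y ∈ Sᶜ, t ^ γ ≤ m n y ^ γ := by
      intro y hy
      simp only [hS, mem_compl_iff, mem_setOf_eq] at hy
      refine ENNReal.rpow_le_rpow (le_min ?_ ?_) hγ.le
      · exact (not_le.1 hy).le
      · exact ht_le_m.trans (hmn n x)
    -- assemble
    have hchain : t ^ γ * (m n x / 2) ≤ pot G (ν n) x := by
      have hwd : pot G (ν n) x = ∫⁻ y, m n y ^ γ * G x y ∂(σn n) := by
        rw [hν, pot, lintegral_withDensity_eq_lintegral_mul _ (hmg_meas n) (hGx x)]
        rfl
      rw [hwd]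
      calc t ^ γ * (m n x / 2) ≤ t ^ γ * ∫⁻ y in Sᶜ, G x y ∂(σn n) :=
            mul_le_mul_right hQ _
        _ = ∫⁻ y in Sᶜ, t ^ γ * G x y ∂(σn n) := (lintegral_const_mul _ (hGx x)).symm
        _ ≤ ∫⁻ y in Sᶜ, m n y ^ γ * G x y ∂(σn n) :=
            setLIntegral_mono ((hmg_meas n).mul (hGx x)) fun y hy =>
              mul_le_mul_left (htm y hy) _
        _ ≤ ∫⁻ y, m n y ^ γ * G x y ∂(σn n) :=
            lintegral_mono' Measure.restrict_le_self le_rfl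
    refine le_trans (le_of_eq ?_) hchain
    have htγ : t ^ γ = m n x ^ γ * ((2 * bb) ^ γ)⁻¹ := by
      rw [ht, div_eq_mul_inv, ENNReal.mul_rpow_of_nonneg _ _ hγ.le, ENNReal.inv_rpow]
    rw [htγ, hc₀def, add_comm (1:ℝ) γ, ENNReal.rpow_add _ _ hm0 (hmtop n x),
      ENNReal.rpow_one, div_eq_mul_inv,
      ENNReal.mul_inv (Or.inl (by norm_num)) (Or.inl (by norm_num))]
    ring
  -- integrated lower bound
  have hexp : (1 + γ) * q = γ := by
    rw [hγdef]; field_simp; ring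
  have hL : ∀ n, c₀ * (B n) ^ (1/q) ≤ lqNorm q σ (pot G (ν n)) := by
    intro n
    have h1 : ∫⁻ x, (c₀ * m n x ^ (1 + γ)) ^ q ∂σ ≤ ∫⁻ x, (pot G (ν n) x) ^ q ∂σ :=
      lintegral_mono fun x => ENNReal.rpow_le_rpow (hkey n x) hq0.le
    have h2 : ∫⁻ x, (c₀ * m n x ^ (1 + γ)) ^ q ∂σ = c₀ ^ q * B n := by
      rw [hB]
      rw [← lintegral_const_mul _ (hmg_meas n)]
      congr 1
      ext x
      rw [ENNReal.mul_rpow_of_nonneg _ _ hq0.le, ← ENNReal.rpow_mul, hexp]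
    have h3 : (c₀ ^ q * B n) ^ (1/q) = c₀ * (B n) ^ (1/q) := by
      rw [ENNReal.mul_rpow_of_nonneg _ _ (by positivity : (0:ℝ) ≤ 1/q),
        ← ENNReal.rpow_mul, mul_one_div_cancel hq0.ne', ENNReal.rpow_one]
    calc c₀ * (B n) ^ (1/q) = (c₀ ^ q * B n) ^ (1/q) := h3.symm
      _ ≤ (∫⁻ x, (pot G (ν n) x) ^ q ∂σ) ^ (1/q) := by
          rw [← h2]
          exact ENNReal.rpow_le_rpow h1 (by positivity)
      _ = lqNorm q σ (pot G (ν n)) := rfl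
  -- the bound uniform in n
  have h1q : 1/γ + 1 = 1/q := by
    rw [hγdef]; field_simp; ring
  have hBn : ∀ n, c₀ * (B n) ^ (1/γ) ≤ kappa G q σ := by
    intro n
    refine le_sInf fun C hC => ?_
    haveI : IsFiniteMeasure (ν n) := ⟨hνfin n⟩
    have hCν : lqNorm q σ (pot G (ν n)) ≤ C * (ν n) univ := hC (ν n) inferInstance
    have hVB : (ν n) univ ≤ B n := by
      rw [hνuniv n, hB]
      exact lintegral_mono' Measure.restrict_le_self le_rfl
    have hmain : c₀ * (B n) ^ (1/q) ≤ C * (ν n) univ := (hL n).trans hCν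
    rcases eq_or_ne (B n) 0 with h0 | h0
    · rw [h0, ENNReal.zero_rpow_of_pos (by positivity : (0:ℝ) < 1/γ), mul_zero]
      exact zero_le
    rcases eq_or_ne (B n) ∞ with hBtop | hBtop
    · have hlhs : c₀ * (B n) ^ (1/q) = ∞ := by
        rw [hBtop, ENNReal.top_rpow_of_pos (by positivity : (0:ℝ) < 1/q),
          ENNReal.mul_top hc₀0]
      rw [hlhs] at hmain
      have hCtop : C = ∞ := by
        by_contra hCne
        exact (ENNReal.mul_ne_top hCne (hνfin n).ne) (le_antisymm le_top hmain)
      rw [hCtop]; exact le_top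
    · have hsplit : (B n) ^ (1/q) = (B n) ^ (1/γ) * B n := by
        rw [← h1q, ENNReal.rpow_add _ _ h0 hBtop, ENNReal.rpow_one]
      rw [hsplit, ← mul_assoc] at hmain
      have hmain2 : (c₀ * (B n) ^ (1/γ)) * B n ≤ C * B n :=
        hmain.trans (mul_le_mul_right hVB C)
      exact (ENNReal.mul_le_mul_iff_left h0 hBtop).1 hmain2
  -- pass to the limit
  have hFsup : ∀ x, (⨆ n, F n x) = pot G σ x := by
    intro x
    have hind : ∀ n, F n x = ∫⁻ y, (Kn n).indicator (fun y => G x y) y ∂σ := fun n => by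
      rw [show F n x = ∫⁻ y in Kn n, G x y ∂σ from rfl, ← lintegral_indicator (hKmeas n)]
    calc (⨆ n, F n x) = ⨆ n, ∫⁻ y, (Kn n).indicator (fun y => G x y) y ∂σ := by
          simp_rw [hind]
      _ = ∫⁻ y, ⨆ n, (Kn n).indicator (fun y => G x y) y ∂σ :=
          (lintegral_iSup (fun n => (hGx x).indicator (hKmeas n))
            (fun i j hij y => indicator_le_indicator_of_subset (hKmono hij)
              (fun _ => zero_le) y)).symm
      _ = ∫⁻ y, G x y ∂σ := by
          congr 1
          ext y
          have hy : ∃ n, y ∈ Kn n := by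
            have : y ∈ ⋃ n, Kn n := by rw [hKunion]; trivial
            simpa using this
          obtain ⟨n, hn⟩ := hy
          refine le_antisymm (iSup_le fun k => indicator_le_self _ _ y) ?_
          exact le_iSup_of_le n (by rw [indicator_of_mem hn])
      _ = pot G σ x := rfl
  have hmsup : ∀ x, (⨆ n, m n x) = pot G σ x := by
    intro x
    apply le_antisymm
    · exact iSup_le fun n => (hmF n x).trans (hFle n x)
    · rw [← hFsup x]
      refine le_of_forall_lt fun d hd => ?_
      rw [lt_iSup_iff] at hd
      obtain ⟨n₀, hn₀⟩ := hd
      obtain ⟨N, hN⟩ := ENNReal.exists_nat_gt (ne_top_of_lt hn₀)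
      rw [lt_iSup_iff]
      refine ⟨max n₀ N, lt_min ?_ ?_⟩
      · exact hn₀.trans_le (hFmono x (le_max_left _ _))
      · exact hN.trans_le (Nat.cast_le.2 (le_max_right _ _))
  have hmono_mγ : Monotone fun n => fun x => m n x ^ γ := fun i j hij x =>
    ENNReal.rpow_le_rpow (min_le_min (hFmono x hij) (Nat.cast_le.2 hij)) hγ.le
  have hBsup : (⨆ n, B n) = ∫⁻ x, (pot G σ x) ^ γ ∂σ := by
    rw [hB, ← lintegral_iSup hmg_meas hmono_mγ]
    congr 1
    ext x
    rw [← hmsup x]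
    exact (Monotone.map_iSup_of_continuousAt
      (ENNReal.continuous_rpow_const.continuousAt)
      (fun a b hab => ENNReal.rpow_le_rpow hab hγ.le)
      (ENNReal.zero_rpow_of_pos hγ)).symm
  -- conclude
  set κ := kappa G q σ with hκ
  have hBle : ∀ n, B n ≤ (κ / c₀) ^ γ := by
    intro n
    have h1 : (B n) ^ (1/γ) ≤ κ / c₀ := by
      rw [ENNReal.le_div_iff_mul_le (Or.inl hc₀0) (Or.inl hc₀top), mul_comm]
      exact hBn n
    calc B n = ((B n) ^ (1/γ)) ^ γ := by
          rw [← ENNReal.rpow_mul, one_div, inv_mul_cancel₀ hγ.ne', ENNReal.rpow_one]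
      _ ≤ (κ / c₀) ^ γ := ENNReal.rpow_le_rpow h1 hγ.le
  have hint : ∫⁻ x, (pot G σ x) ^ γ ∂σ ≤ (κ / c₀) ^ γ := by
    rw [← hBsup]
    exact iSup_le hBle
  have hnorm : lqNorm γ σ (pot G σ) ≤ κ / c₀ := by
    calc lqNorm γ σ (pot G σ) = (∫⁻ x, (pot G σ x) ^ γ ∂σ) ^ (1/γ) := rfl
      _ ≤ ((κ / c₀) ^ γ) ^ (1/γ) := ENNReal.rpow_le_rpow hint (by positivity)
      _ = κ / c₀ := by
          rw [← ENNReal.rpow_mul, mul_one_div_cancel hγ.ne', ENNReal.rpow_one]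
  calc c₀ * lqNorm γ σ (pot G σ) ≤ c₀ * (κ / c₀) := mul_le_mul_right hnorm c₀
    _ ≤ κ := ENNReal.mul_div_le


end NPE
end
end

section
/- Let Ω be a locally compact Hausdorff space with countable base, 0 < q < 1, σ a locally finite Radon measure on Ω, and G a kernel on Ω satisfying the weak maximum principle with constant 𝔟. Let u be a nontrivial super-solution, i.e., u > 0 σ-a.e. and G(u^q dσ) ≤ u < +∞ σ-a.e. Then u(x) ≥ c (Gσ(x))^{1/(1−q)}, with c = (1−q)^{1/(1−q)} 𝔟^{−q/(1−q)}, at every x ∈ Ω such that G(u^q dσ)(x) ≤ u(x); in particular, this estimate holds σ-a.e. -/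
open MeasureTheory ENNReal Set

noncomputable section

namespace NPE

variable {Ω : Type*} [TopologicalSpace Ω] [MeasurableSpace Ω]

section AuxNPE

open Filter Topology

variable {Ω : Type*} [TopologicalSpace Ω] [MeasurableSpace Ω]

lemma ker_slice_meas [SecondCountableTopology Ω] [OpensMeasurableSpace Ω]
    {G : Ω → Ω → ℝ≥0∞} (hGk : IsKernel G) (x : Ω) : Measurable fun y => G x y := by
  have h : Measurable (fun p : Ω × Ω => G p.1 p.2) := LowerSemicontinuous.measurable hGk
  exact h.comp (measurable_const.prodMk measurable_id)

lemma pot_lsc [SecondCountableTopology Ω] [OpensMeasurableSpace Ω]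
    {G : Ω → Ω → ℝ≥0∞} (hGk : IsKernel G) (μ : Measure Ω) :
    LowerSemicontinuous (pot G μ) := by
  have hGlsc : LowerSemicontinuous (fun p : Ω × Ω => G p.1 p.2) := hGk
  intro x c hc
  by_contra h
  rw [Filter.not_eventually] at h
  obtain ⟨xs, hxs, hle⟩ := Filter.exists_seq_forall_of_frequently h
  have hle' : ∀ n, pot G μ (xs n) ≤ c := fun n => not_lt.1 (hle n)
  have key : pot G μ x ≤ c := by
    calc pot G μ x ≤ ∫⁻ y, Filter.liminf (fun n => G (xs n) y) Filter.atTop ∂μ := by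
          apply lintegral_mono
          intro y
          have hiff := Filter.le_liminf_iff (f := Filter.atTop)
            (u := fun n => G (xs n) y) (x := G x y)
          refine hiff.2 fun d hd => ?_
          have hev := hGlsc (x, y) d hd
          have ht : Filter.Tendsto (fun n => (xs n, y)) Filter.atTop (𝓝 (x, y)) :=
            hxs.prodMk_nhds tendsto_const_nhds
          exact ht.eventually hev
      _ ≤ Filter.liminf (fun n => pot G μ (xs n)) Filter.atTop :=
          lintegral_liminf_le fun n => ker_slice_meas hGk (xs n)
      _ ≤ c := by
          refine le_trans (Filter.liminf_le_liminf (Filter.Eventually.of_forall hle')) ?_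
          simp [Filter.liminf_const]
  exact absurd key (not_le.2 hc)

lemma wmp_bound [SecondCountableTopology Ω] [OpensMeasurableSpace Ω]
    {G : Ω → Ω → ℝ≥0∞} {b : ℝ} (hGk : IsKernel G) (hWMP : WMP G b)
    (μ : Measure Ω) [IsLocallyFiniteMeasure μ] {t : ℝ} (ht : 0 < t)
    (hae : ∀ᵐ z ∂μ, pot G μ z ≤ ENNReal.ofReal t) (x : Ω) :
    pot G μ x ≤ ENNReal.ofReal (t * b) := by
  have ht0 : ENNReal.ofReal t ≠ 0 := by simp [ENNReal.ofReal_eq_zero, not_le, ht]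
  have hcne : (ENNReal.ofReal t)⁻¹ ≠ ∞ := by simp [ht0]
  have hlf : IsLocallyFiniteMeasure ((ENNReal.ofReal t)⁻¹ • μ) := by
    constructor
    intro z
    obtain ⟨s, hs, hfin⟩ := μ.finiteAt_nhds z
    refine ⟨s, hs, ?_⟩
    simp only [Measure.smul_apply, smul_eq_mul]
    exact ENNReal.mul_lt_top hcne.lt_top hfin
  have hsupp : ∀ z ∈ msupp ((ENNReal.ofReal t)⁻¹ • μ),
      pot G ((ENNReal.ofReal t)⁻¹ • μ) z ≤ 1 := by
    intro z hz
    have hzle : pot G μ z ≤ ENNReal.ofReal t := by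
      by_contra hlt
      rw [not_le] at hlt
      obtain ⟨U, hU, hUopen, hzU⟩ := eventually_nhds_iff.1 (pot_lsc hGk μ z _ hlt)
      have hpos : 0 < ((ENNReal.ofReal t)⁻¹ • μ) U := hz U hUopen hzU
      have hnull : μ U = 0 := by
        have h0 : μ {w | ¬ pot G μ w ≤ ENNReal.ofReal t} = 0 := ae_iff.1 hae
        exact measure_mono_null (fun w hw => not_le.2 (hU w hw)) h0
      rw [Measure.smul_apply, smul_eq_mul, hnull, mul_zero] at hpos
      exact lt_irrefl 0 hpos
    have hpoteq : pot G ((ENNReal.ofReal t)⁻¹ • μ) z = (ENNReal.ofReal t)⁻¹ * pot G μ z :=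
      lintegral_smul_measure _ _
    rw [hpoteq]
    calc (ENNReal.ofReal t)⁻¹ * pot G μ z ≤ (ENNReal.ofReal t)⁻¹ * ENNReal.ofReal t :=
          mul_le_mul_right hzle _
      _ = 1 := ENNReal.inv_mul_cancel ht0 ENNReal.ofReal_ne_top
  have hfinal := hWMP.2 ((ENNReal.ofReal t)⁻¹ • μ) hlf hsupp x
  have hpoteq : pot G ((ENNReal.ofReal t)⁻¹ • μ) x = (ENNReal.ofReal t)⁻¹ * pot G μ x :=
    lintegral_smul_measure _ _
  rw [hpoteq] at hfinal
  have : pot G μ x = ENNReal.ofReal t * ((ENNReal.ofReal t)⁻¹ * pot G μ x) := by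
    rw [← mul_assoc, ENNReal.mul_inv_cancel ht0 ENNReal.ofReal_ne_top, one_mul]
  rw [this, ENNReal.ofReal_mul ht.le]
  exact mul_le_mul_right hfinal _

lemma lint_tail {q : ℝ} (hq0 : 0 < q) {s : ℝ} (hs : 0 < s) :
    ∫⁻ t in Ioi s, ENNReal.ofReal (q * t ^ (-q - 1)) = ENNReal.ofReal (s ^ (-q)) := by
  have hlt : (-q - 1 : ℝ) < -1 := by linarith
  have hint : IntegrableOn (fun t : ℝ => q * t ^ (-q - 1)) (Ioi s) :=
    (integrableOn_Ioi_rpow_of_lt hlt hs).const_mul q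
  have hnn : 0 ≤ᵐ[volume.restrict (Ioi s)] fun t : ℝ => q * t ^ (-q - 1) := by
    filter_upwards [ae_restrict_mem measurableSet_Ioi] with t ht
    exact mul_nonneg hq0.le (Real.rpow_nonneg (hs.trans ht).le _)
  rw [← ofReal_integral_eq_lintegral_ofReal hint hnn]
  congr 1
  rw [MeasureTheory.integral_const_mul, integral_Ioi_rpow_of_lt hlt hs]
  have h1 : (-q - 1 + 1 : ℝ) = -q := by ring
  rw [h1, neg_div_neg_eq, mul_comm, div_mul_cancel₀ _ hq0.ne']

end AuxNPE

/-- lower bound `u ≥ c (Gσ)^{1/(1-q)}`, with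
`c = (1-q)^{1/(1-q)} 𝔟^{-q/(1-q)}`, for nontrivial super-solutions, for a kernel obeying
the weak maximum principle. -/
theorem statement9 [LocallyCompactSpace Ω] [T2Space Ω] [SecondCountableTopology Ω]
    [BorelSpace Ω] (G : Ω → Ω → ℝ≥0∞) (q b : ℝ) (hq0 : 0 < q) (hq1 : q < 1)
    (σ : Measure Ω) [IsLocallyFiniteMeasure σ] (hGk : IsKernel G) (hWMP : WMP G b)
    (u : Ω → ℝ≥0∞) (hu : Measurable u) (hupos : ∀ᵐ x ∂σ, 0 < u x)
    (husup : ∀ᵐ x ∂σ, potF G σ (fun y => u y ^ q) x ≤ u x ∧ u x < ∞) :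
    (∀ x : Ω, potF G σ (fun y => u y ^ q) x ≤ u x →
      ENNReal.ofReal ((1 - q) ^ ((1 : ℝ) / (1 - q)) * b ^ (-(q / (1 - q)))) *
          pot G σ x ^ ((1 : ℝ) / (1 - q)) ≤ u x) ∧
    ∀ᵐ x ∂σ,
      ENNReal.ofReal ((1 - q) ^ ((1 : ℝ) / (1 - q)) * b ^ (-(q / (1 - q)))) *
          pot G σ x ^ ((1 : ℝ) / (1 - q)) ≤ u x := by
  have hb1 : 1 ≤ b := hWMP.1
  have hb0 : (0:ℝ) < b := lt_of_lt_of_le one_pos hb1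
  have h1q : (0:ℝ) < 1 - q := by linarith
  have h1q' : (1 - q : ℝ) ≠ 0 := h1q.ne'
  have hGm : ∀ z : Ω, Measurable fun y => G z y := fun z => ker_slice_meas hGk z
  have huq : Measurable fun y => u y ^ q := hu.pow_const q
  set S : ℝ → Set Ω := fun t => {y | u y < ENNReal.ofReal t} with hSdef
  have hSm : ∀ t, MeasurableSet (S t) := fun t => measurableSet_lt hu measurable_const
  set ν : ℝ → Measure Ω :=
    fun t => (σ.restrict (S t)).withDensity (fun y => u y ^ q) with hνdef
  have hwm : Measurable fun t : ℝ => ENNReal.ofReal (q * t ^ (-q - 1)) :=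
    ENNReal.measurable_ofReal.comp ((measurable_id.pow_const _).const_mul q)
  -- basic identity for the potential of ν t
  have hνpot : ∀ (t : ℝ) (z : Ω), pot G (ν t) z
      = ∫⁻ y, (if u y < ENNReal.ofReal t then u y ^ q * G z y else 0) ∂σ := by
    intro t z
    show ∫⁻ y, G z y ∂(ν t) = _
    simp only [hνdef]
    rw [lintegral_withDensity_eq_lintegral_mul _ huq (hGm z),
      ← lintegral_indicator (hSm t)]
    refine lintegral_congr fun y => ?_
    by_cases hy : u y < ENNReal.ofReal t
    · have hym : y ∈ S t := hy
      rw [Set.indicator_of_mem hym, if_pos hy]; rfl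
    · have hym : y ∉ S t := hy
      rw [Set.indicator_of_notMem hym, if_neg hy]
  -- pot of ν t is dominated by the nonlinear potential of u
  have hνle : ∀ (t : ℝ) (z : Ω), pot G (ν t) z ≤ potF G σ (fun y => u y ^ q) z := by
    intro t z
    rw [hνpot t z]
    simp only [potF]
    refine lintegral_mono fun y => ?_
    by_cases hy : u y < ENNReal.ofReal t
    · rw [if_pos hy]; exact le_of_eq (mul_comm _ _)
    · rw [if_neg hy]; exact zero_le
  -- local finiteness of ν t
  have hνlf : ∀ t : ℝ, IsLocallyFiniteMeasure (ν t) := by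
    intro t
    have hle : ν t ≤ (ENNReal.ofReal t ^ q) • σ := by
      rw [Measure.le_iff]
      intro A hA
      simp only [hνdef]
      rw [MeasureTheory.withDensity_apply _ hA, Measure.restrict_restrict hA]
      calc ∫⁻ y in A ∩ S t, u y ^ q ∂σ
          ≤ ∫⁻ _ in A ∩ S t, ENNReal.ofReal t ^ q ∂σ := by
            refine lintegral_mono_ae ?_
            filter_upwards [ae_restrict_mem (hA.inter (hSm t))] with y hy
            exact ENNReal.rpow_le_rpow (le_of_lt hy.2) hq0.le
        _ = ENNReal.ofReal t ^ q * σ (A ∩ S t) := setLIntegral_const _ _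
        _ ≤ ENNReal.ofReal t ^ q * σ A := mul_le_mul_right (measure_mono inter_subset_left) _
        _ = ((ENNReal.ofReal t ^ q) • σ) A := by
            simp [Measure.smul_apply, smul_eq_mul]
    constructor
    intro z
    obtain ⟨s, hs, hfin⟩ := σ.finiteAt_nhds z
    refine ⟨s, hs, lt_of_le_of_lt (Measure.le_iff'.1 hle s) ?_⟩
    simp only [Measure.smul_apply, smul_eq_mul]
    exact ENNReal.mul_lt_top
      (ENNReal.rpow_ne_top_of_nonneg hq0.le ENNReal.ofReal_ne_top).lt_top hfin
  -- the a.e. bound needed for the weak maximum principle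
  have hνae : ∀ t : ℝ, ∀ᵐ z ∂(ν t), pot G (ν t) z ≤ ENNReal.ofReal t := by
    intro t
    have hac : ν t ≪ σ := by
      simp only [hνdef]
      exact (withDensity_absolutelyContinuous _ _).trans
        (Measure.absolutelyContinuous_of_le Measure.restrict_le_self)
    have h2 : ∀ᵐ z ∂(ν t), z ∈ S t := by
      rw [ae_iff]
      have hz : ν t ((S t)ᶜ) = 0 := by
        simp only [hνdef]
        rw [MeasureTheory.withDensity_apply _ (hSm t).compl,
          Measure.restrict_restrict (hSm t).compl, compl_inter_self]
        simp
      exact hz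
    have h1 : ∀ᵐ z ∂(ν t), potF G σ (fun y => u y ^ q) z ≤ u z :=
      Filter.Eventually.filter_mono hac.ae_le (husup.mono fun z hz => hz.1)
    filter_upwards [h1, h2] with z hz1 hz2
    exact le_trans (hνle t z) (le_of_lt (lt_of_le_of_lt hz1 hz2))
  -- WMP bound for ν t
  have hνwmp : ∀ t : ℝ, 0 < t → ∀ z, pot G (ν t) z ≤ ENNReal.ofReal (t * b) := by
    intro t ht z
    haveI := hνlf t
    exact wmp_bound hGk hWMP (ν t) ht (hνae t) z
  -- the layer cake identity
  have hlayer : ∀ x : Ω, pot G σ x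
      = ∫⁻ t in Ioi (0:ℝ), ENNReal.ofReal (q * t ^ (-q - 1)) * pot G (ν t) x := by
    intro x
    have hmeas : AEMeasurable (Function.uncurry fun (t : ℝ) (y : Ω) =>
        ENNReal.ofReal (q * t ^ (-q - 1)) *
          (if u y < ENNReal.ofReal t then u y ^ q * G x y else 0))
        (((volume : Measure ℝ).restrict (Ioi 0)).prod σ) := by
      refine Measurable.aemeasurable ?_
      refine Measurable.mul (hwm.comp measurable_fst) ?_
      refine Measurable.ite ?_ ((huq.comp measurable_snd).mul ((hGm x).comp measurable_snd))
        measurable_const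
      exact measurableSet_lt (hu.comp measurable_snd)
        (ENNReal.measurable_ofReal.comp measurable_fst)
    have hswap : ∫⁻ t in Ioi (0:ℝ), ENNReal.ofReal (q * t ^ (-q - 1)) * pot G (ν t) x
        = ∫⁻ y, (∫⁻ t in Ioi (0:ℝ), ENNReal.ofReal (q * t ^ (-q - 1)) *
            (if u y < ENNReal.ofReal t then u y ^ q * G x y else 0)) ∂σ := by
      rw [← lintegral_lintegral_swap hmeas]
      refine lintegral_congr fun t => ?_
      rw [hνpot t x, ← lintegral_const_mul' _ _ ENNReal.ofReal_ne_top]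
    rw [hswap]
    show ∫⁻ y, G x y ∂σ = _
    refine lintegral_congr_ae ?_
    filter_upwards [hupos, husup] with y hy0 hy
    refine Eq.symm ?_
    have hyt : u y ≠ ∞ := hy.2.ne
    have hs : 0 < (u y).toReal := ENNReal.toReal_pos hy0.ne' hyt
    have hfun : ∀ t : ℝ, ENNReal.ofReal (q * t ^ (-q - 1)) *
        (if u y < ENNReal.ofReal t then u y ^ q * G x y else 0)
        = (Ioi ((u y).toReal)).indicator (fun t => ENNReal.ofReal (q * t ^ (-q - 1))) t *
            (u y ^ q * G x y) := by
      intro t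
      by_cases hts : (u y).toReal < t
      · have hlt : u y < ENNReal.ofReal t := (ENNReal.lt_ofReal_iff_toReal_lt hyt).2 hts
        have htm : t ∈ Ioi ((u y).toReal) := hts
        rw [if_pos hlt, Set.indicator_of_mem htm]
      · have hnlt : ¬ u y < ENNReal.ofReal t :=
          fun hlt => hts ((ENNReal.lt_ofReal_iff_toReal_lt hyt).1 hlt)
        have htm : t ∉ Ioi ((u y).toReal) := hts
        rw [if_neg hnlt, Set.indicator_of_notMem htm, mul_zero, zero_mul]
    calc ∫⁻ t in Ioi (0:ℝ), ENNReal.ofReal (q * t ^ (-q - 1)) *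
            (if u y < ENNReal.ofReal t then u y ^ q * G x y else 0)
        = ∫⁻ t in Ioi (0:ℝ), (Ioi ((u y).toReal)).indicator
            (fun t => ENNReal.ofReal (q * t ^ (-q - 1))) t * (u y ^ q * G x y) :=
          lintegral_congr fun t => hfun t
      _ = (∫⁻ t in Ioi (0:ℝ), (Ioi ((u y).toReal)).indicator
            (fun t => ENNReal.ofReal (q * t ^ (-q - 1))) t) * (u y ^ q * G x y) :=
          lintegral_mul_const _ (hwm.indicator measurableSet_Ioi)
      _ = ENNReal.ofReal ((u y).toReal ^ (-q)) * (u y ^ q * G x y) := by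
          rw [lintegral_indicator measurableSet_Ioi,
            Measure.restrict_restrict measurableSet_Ioi, Set.Ioi_inter_Ioi,
            sup_eq_left.2 hs.le, lint_tail hq0 hs]
      _ = G x y := by
          have h1 : ENNReal.ofReal ((u y).toReal ^ (-q)) = u y ^ (-q) := by
            rw [← ENNReal.ofReal_rpow_of_pos hs, ENNReal.ofReal_toReal hyt]
          rw [h1, ← mul_assoc, ← ENNReal.rpow_add _ _ hy0.ne' hyt]
          have h2 : (-q) + q = 0 := by ring
          rw [h2, ENNReal.rpow_zero, one_mul]
  -- the pointwise estimate
  have hmain : ∀ x : Ω, potF G σ (fun y => u y ^ q) x ≤ u x →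
      ENNReal.ofReal ((1 - q) ^ ((1 : ℝ) / (1 - q)) * b ^ (-(q / (1 - q)))) *
        pot G σ x ^ ((1 : ℝ) / (1 - q)) ≤ u x := by
    intro x hx
    rcases eq_top_or_lt_top (u x) with htop | hfin
    · rw [htop]; exact le_top
    by_cases h0 : u x = 0
    · have hpot0 : pot G σ x = 0 := by
        rw [hlayer x]
        have hzero : ∀ t : ℝ, ENNReal.ofReal (q * t ^ (-q - 1)) * pot G (ν t) x = 0 := by
          intro t
          have hle0 : pot G (ν t) x ≤ 0 := by
            have := le_trans (hνle t x) hx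
            rwa [h0] at this
          rw [le_zero_iff.1 hle0, mul_zero]
        simp only [hzero]
        simp
      rw [hpot0, ENNReal.zero_rpow_of_pos (one_div_pos.2 h1q), mul_zero, h0]
    -- main case : 0 < u x < ∞
    have hUt : 0 < (u x).toReal := ENNReal.toReal_pos h0 hfin.ne
    set T : ℝ := (u x).toReal / b with hTdef
    have hTpos : 0 < T := div_pos hUt hb0
    have hbT : b * T = (u x).toReal := by
      rw [hTdef, mul_comm, div_mul_cancel₀ _ hb0.ne']
    have hUeq : u x = ENNReal.ofReal (b * T) := by
      rw [hbT, ENNReal.ofReal_toReal hfin.ne]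
    have hTT : T ^ (-q) * T = T ^ (1 - q) := by
      have h := (Real.rpow_add hTpos (-q) 1).symm
      rw [Real.rpow_one] at h
      rw [h]; congr 1; ring
    -- first part of the split integral
    have part1 : ∫⁻ t in Ioc (0:ℝ) T, ENNReal.ofReal (q * t ^ (-q - 1)) * pot G (ν t) x
        ≤ ENNReal.ofReal (q * b * (T ^ (1 - q) / (1 - q))) := by
      have hint : IntegrableOn (fun t : ℝ => q * b * t ^ (-q)) (Ioc 0 T) :=
        ((intervalIntegral.intervalIntegrable_rpow'
          (by linarith : (-1:ℝ) < -q)).1).const_mul (q * b)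
      have hnn : 0 ≤ᵐ[volume.restrict (Ioc (0:ℝ) T)] fun t : ℝ => q * b * t ^ (-q) := by
        filter_upwards [ae_restrict_mem measurableSet_Ioc] with t ht
        exact mul_nonneg (mul_nonneg hq0.le hb0.le) (Real.rpow_nonneg ht.1.le _)
      calc ∫⁻ t in Ioc (0:ℝ) T, ENNReal.ofReal (q * t ^ (-q - 1)) * pot G (ν t) x
          ≤ ∫⁻ t in Ioc (0:ℝ) T, ENNReal.ofReal (q * b * t ^ (-q)) := by
            refine lintegral_mono_ae ?_
            filter_upwards [ae_restrict_mem measurableSet_Ioc] with t ht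
            have ht0 : 0 < t := ht.1
            calc ENNReal.ofReal (q * t ^ (-q - 1)) * pot G (ν t) x
                ≤ ENNReal.ofReal (q * t ^ (-q - 1)) * ENNReal.ofReal (t * b) :=
                  mul_le_mul_right (hνwmp t ht0 x) _
              _ = ENNReal.ofReal (q * t ^ (-q - 1) * (t * b)) :=
                  (ENNReal.ofReal_mul (mul_nonneg hq0.le (Real.rpow_nonneg ht0.le _))).symm
              _ = ENNReal.ofReal (q * b * t ^ (-q)) := by
                  congr 1
                  have htt : t ^ (-q - 1) * t = t ^ (-q) := by
                    have h := (Real.rpow_add ht0 (-q - 1) 1).symm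
                    rw [Real.rpow_one] at h
                    rw [h]; congr 1; ring
                  calc q * t ^ (-q - 1) * (t * b) = q * b * (t ^ (-q - 1) * t) := by ring
                    _ = q * b * t ^ (-q) := by rw [htt]
        _ = ENNReal.ofReal (q * b * (T ^ (1 - q) / (1 - q))) := by
            rw [← ofReal_integral_eq_lintegral_ofReal hint hnn]
            congr 1
            rw [MeasureTheory.integral_const_mul,
              ← intervalIntegral.integral_of_le hTpos.le,
              integral_rpow (Or.inl (by linarith : (-1:ℝ) < -q)),
              Real.zero_rpow (by linarith : (-q + 1 : ℝ) ≠ 0)]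
            have he : (-q + 1 : ℝ) = 1 - q := by ring
            rw [he]
            ring
    -- second part of the split integral
    have part2 : ∫⁻ t in Ioi T, ENNReal.ofReal (q * t ^ (-q - 1)) * pot G (ν t) x
        ≤ ENNReal.ofReal (T ^ (-q)) * u x := by
      calc ∫⁻ t in Ioi T, ENNReal.ofReal (q * t ^ (-q - 1)) * pot G (ν t) x
          ≤ ∫⁻ t in Ioi T, ENNReal.ofReal (q * t ^ (-q - 1)) * u x :=
            lintegral_mono fun t => mul_le_mul_right (le_trans (hνle t x) hx) _
        _ = (∫⁻ t in Ioi T, ENNReal.ofReal (q * t ^ (-q - 1))) * u x :=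
            lintegral_mul_const' _ _ hfin.ne
        _ = ENNReal.ofReal (T ^ (-q)) * u x := by rw [lint_tail hq0 hTpos]
    -- combine
    have key2 : ENNReal.ofReal (T ^ (-q)) * u x = ENNReal.ofReal (b * T ^ (1 - q)) := by
      rw [hUeq, ← ENNReal.ofReal_mul (Real.rpow_nonneg hTpos.le _)]
      congr 1
      calc T ^ (-q) * (b * T) = b * (T ^ (-q) * T) := by ring
        _ = b * T ^ (1 - q) := by rw [hTT]
    have key3 : ENNReal.ofReal (q * b * (T ^ (1 - q) / (1 - q)))
        + ENNReal.ofReal (b * T ^ (1 - q))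
        = ENNReal.ofReal (b * T ^ (1 - q) / (1 - q)) := by
      rw [← ENNReal.ofReal_add (mul_nonneg (mul_nonneg hq0.le hb0.le)
        (div_nonneg (Real.rpow_nonneg hTpos.le _) h1q.le))
        (mul_nonneg hb0.le (Real.rpow_nonneg hTpos.le _))]
      congr 1
      field_simp
      ring
    have key4 : ENNReal.ofReal (b ^ q / (1 - q)) * u x ^ (1 - q)
        = ENNReal.ofReal (b * T ^ (1 - q) / (1 - q)) := by
      rw [hUeq, ENNReal.ofReal_rpow_of_pos (mul_pos hb0 hTpos),
        ← ENNReal.ofReal_mul (div_nonneg (Real.rpow_nonneg hb0.le _) h1q.le)]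
      congr 1
      rw [Real.mul_rpow hb0.le hTpos.le]
      have hbb : b ^ q * b ^ (1 - q) = b := by
        rw [← Real.rpow_add hb0]
        have : (q + (1 - q) : ℝ) = 1 := by ring
        rw [this, Real.rpow_one]
      calc b ^ q / (1 - q) * (b ^ (1 - q) * T ^ (1 - q))
          = b ^ q * b ^ (1 - q) * T ^ (1 - q) / (1 - q) := by ring
        _ = b * T ^ (1 - q) / (1 - q) := by rw [hbb]
    have hsplit : pot G σ x ≤ ENNReal.ofReal (b ^ q / (1 - q)) * u x ^ (1 - q) := by
      calc pot G σ x
          = ∫⁻ t in Ioi (0:ℝ), ENNReal.ofReal (q * t ^ (-q - 1)) * pot G (ν t) x :=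
            hlayer x
        _ = (∫⁻ t in Ioc (0:ℝ) T, ENNReal.ofReal (q * t ^ (-q - 1)) * pot G (ν t) x)
            + ∫⁻ t in Ioi T, ENNReal.ofReal (q * t ^ (-q - 1)) * pot G (ν t) x := by
            rw [← Ioc_union_Ioi_eq_Ioi hTpos.le,
              lintegral_union measurableSet_Ioi (Ioc_disjoint_Ioi le_rfl)]
        _ ≤ ENNReal.ofReal (q * b * (T ^ (1 - q) / (1 - q)))
            + ENNReal.ofReal (T ^ (-q)) * u x := add_le_add part1 part2
        _ = ENNReal.ofReal (b ^ q / (1 - q)) * u x ^ (1 - q) := by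
            rw [key2, key3, key4]
    -- conclude
    have hβ : (0:ℝ) < 1 / (1 - q) := one_div_pos.2 h1q
    have hA : (0:ℝ) < b ^ q / (1 - q) := div_pos (Real.rpow_pos_of_pos hb0 q) h1q
    have hC0 : (0:ℝ) ≤ (1 - q) ^ ((1 : ℝ) / (1 - q)) * b ^ (-(q / (1 - q))) :=
      mul_nonneg (Real.rpow_nonneg h1q.le _) (Real.rpow_nonneg hb0.le _)
    have hCC : ((1 - q) ^ ((1 : ℝ) / (1 - q)) * b ^ (-(q / (1 - q))))
        * (b ^ q / (1 - q)) ^ ((1 : ℝ) / (1 - q)) = 1 := by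
      have h3 : ((b : ℝ) ^ q) ^ ((1:ℝ) / (1 - q)) = b ^ (q / (1 - q)) := by
        rw [← Real.rpow_mul hb0.le, mul_one_div]
      have h2 : (b : ℝ) ^ (-(q / (1 - q))) * b ^ (q / (1 - q)) = 1 := by
        rw [← Real.rpow_add hb0, neg_add_cancel, Real.rpow_zero]
      have h1 : (0:ℝ) < (1 - q) ^ ((1:ℝ) / (1 - q)) := Real.rpow_pos_of_pos h1q _
      rw [Real.div_rpow (Real.rpow_nonneg hb0.le q) h1q.le, h3]
      calc (1 - q) ^ ((1:ℝ) / (1 - q)) * b ^ (-(q / (1 - q)))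
            * (b ^ (q / (1 - q)) / (1 - q) ^ ((1:ℝ) / (1 - q)))
          = ((1 - q) ^ ((1:ℝ) / (1 - q)) / (1 - q) ^ ((1:ℝ) / (1 - q)))
            * (b ^ (-(q / (1 - q))) * b ^ (q / (1 - q))) := by ring
        _ = 1 := by rw [h2, div_self h1.ne']; ring
    calc ENNReal.ofReal ((1 - q) ^ ((1 : ℝ) / (1 - q)) * b ^ (-(q / (1 - q)))) *
          pot G σ x ^ ((1 : ℝ) / (1 - q))
        ≤ ENNReal.ofReal ((1 - q) ^ ((1 : ℝ) / (1 - q)) * b ^ (-(q / (1 - q)))) *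
          (ENNReal.ofReal (b ^ q / (1 - q)) * u x ^ (1 - q)) ^ ((1 : ℝ) / (1 - q)) :=
          mul_le_mul_right (ENNReal.rpow_le_rpow hsplit hβ.le) _
      _ = ENNReal.ofReal ((1 - q) ^ ((1 : ℝ) / (1 - q)) * b ^ (-(q / (1 - q)))) *
          (ENNReal.ofReal ((b ^ q / (1 - q)) ^ ((1 : ℝ) / (1 - q))) * u x) := by
          rw [ENNReal.mul_rpow_of_nonneg _ _ hβ.le, ENNReal.ofReal_rpow_of_pos hA,
            ← ENNReal.rpow_mul]
          have he : ((1 - q) * ((1:ℝ) / (1 - q))) = 1 := by field_simp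
          rw [he, ENNReal.rpow_one]
      _ = ENNReal.ofReal (((1 - q) ^ ((1 : ℝ) / (1 - q)) * b ^ (-(q / (1 - q))))
            * (b ^ q / (1 - q)) ^ ((1 : ℝ) / (1 - q))) * u x := by
          rw [← mul_assoc, ← ENNReal.ofReal_mul hC0]
      _ = u x := by rw [hCC, ENNReal.ofReal_one, one_mul]
  refine ⟨hmain, ?_⟩
  filter_upwards [husup] with x hx
  exact hmain x hx.1

end NPE
end
end

section
/- Let Ω be a locally compact Hausdorff space with countable base, G a quasi-metric kernel on Ω with quasi-metric constant κ, 0 < q < 1, and ν, σ locally finite Radon measures on Ω. Then for all x ∈ Ω, G[(Gν)^q dσ](x) ≤ (2κ)^q (Gν(x))^q [Gσ(x) + (Kσ(x))^{1−q}]. -/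
open MeasureTheory ENNReal Set

noncomputable section

namespace NPE

variable {Ω : Type*} [TopologicalSpace Ω] [MeasurableSpace Ω]

section Aux

lemma aux_base {b : ℝ} (hb : 0 < b) :
    ∫⁻ r in Ioi b, (ENNReal.ofReal (r ^ 2))⁻¹ = ENNReal.ofReal b⁻¹ := by
  have h1 : ∀ r ∈ Ioi b, (ENNReal.ofReal (r ^ 2))⁻¹ = ENNReal.ofReal (r ^ (-2 : ℝ)) := by
    intro r hr
    have hr0 : 0 < r := hb.trans hr
    rw [Real.rpow_neg hr0.le, ENNReal.ofReal_inv_of_pos (by positivity)]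
    norm_num [Real.rpow_natCast r 2]
  rw [setLIntegral_congr_fun measurableSet_Ioi h1,
    ← ofReal_integral_eq_lintegral_ofReal (integrableOn_Ioi_rpow_of_lt (by norm_num) hb)
      ((ae_restrict_mem measurableSet_Ioi).mono fun r hr =>
        Real.rpow_nonneg (hb.trans hr).le _),
    integral_Ioi_rpow_of_lt (by norm_num) hb]
  norm_num [Real.rpow_neg_one]

lemma aux_base_top :
    ∫⁻ r in Ioi (0:ℝ), (ENNReal.ofReal (r ^ 2))⁻¹ = ∞ := by
  refine ENNReal.eq_top_of_forall_nnreal_le fun c => ?_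
  have hb : (0:ℝ) < ((c:ℝ)+1)⁻¹ := by positivity
  calc (c : ℝ≥0∞) ≤ ENNReal.ofReal (((c:ℝ)+1)⁻¹)⁻¹ := by
        rw [inv_inv, ← ENNReal.ofReal_coe_nnreal]
        exact ENNReal.ofReal_le_ofReal (by linarith)
    _ = ∫⁻ r in Ioi (((c:ℝ)+1)⁻¹), (ENNReal.ofReal (r ^ 2))⁻¹ := (aux_base hb).symm
    _ ≤ ∫⁻ r in Ioi (0:ℝ), (ENNReal.ofReal (r ^ 2))⁻¹ :=
        lintegral_mono_set fun r hr => hb.trans hr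

lemma aux_layer {c : ℝ} (hc : 0 < c) (t : ℝ≥0∞) :
    ∫⁻ r in Ioi (0:ℝ), {r' : ℝ | t⁻¹ < ENNReal.ofReal (c * r')}.indicator
      (fun r => (ENNReal.ofReal (r ^ 2))⁻¹) r = ENNReal.ofReal c * t := by
  rcases eq_or_ne t 0 with rfl | ht0
  · simp
  rcases eq_or_ne t ∞ with rfl | htop
  · have hset : {r' : ℝ | (∞ : ℝ≥0∞)⁻¹ < ENNReal.ofReal (c * r')} = Ioi 0 := by
      ext r'
      simp only [ENNReal.inv_top, mem_setOf_eq, ENNReal.ofReal_pos, mem_Ioi]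
      exact mul_pos_iff_of_pos_left hc
    rw [hset, lintegral_indicator measurableSet_Ioi,
      Measure.restrict_restrict measurableSet_Ioi, inter_self, aux_base_top,
      ENNReal.mul_top (by simp [hc])]
  · have hti : t⁻¹ ≠ ∞ := by simp [ht0]
    have htinv0 : t⁻¹ ≠ 0 := by simp [htop]
    set b := (t⁻¹).toReal / c with hbdef
    have hbpos : 0 < b := div_pos (ENNReal.toReal_pos htinv0 hti) hc
    have hset : {r' : ℝ | t⁻¹ < ENNReal.ofReal (c * r')} = Ioi b := by
      ext r'
      rw [mem_setOf_eq, ENNReal.lt_ofReal_iff_toReal_lt hti, mem_Ioi, hbdef,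
        div_lt_iff₀ hc, mul_comm]
    rw [hset, lintegral_indicator measurableSet_Ioi,
      Measure.restrict_restrict measurableSet_Ioi,
      Ioi_inter_Ioi, sup_eq_left.mpr hbpos.le, aux_base hbpos]
    have hb : b⁻¹ = c * t.toReal := by
      rw [hbdef, ENNReal.toReal_inv]
      field_simp
    rw [hb, ENNReal.ofReal_mul hc.le, ENNReal.ofReal_toReal htop]

lemma aux_ball_mono (G : Ω → Ω → ℝ≥0∞) (x : Ω) {r r' : ℝ} (h : r ≤ r') :
    ball G x r ⊆ ball G x r' :=
  fun _ hy => lt_of_lt_of_le hy (ENNReal.ofReal_le_ofReal h)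

lemma aux_ball_measurable {G : Ω → Ω → ℝ≥0∞} (x : Ω) (hGx : Measurable (G x)) (r : ℝ) :
    MeasurableSet (ball G x r) :=
  measurableSet_lt hGx.inv measurable_const

lemma aux_le_kappa {G : Ω → Ω → ℝ≥0∞} {q : ℝ} (hq : 0 < q) (σ' ν' : Measure Ω)
    [IsFiniteMeasure ν'] :
    lqNorm q σ' (pot G ν') ≤ kappa G q σ' * ν' Set.univ := by
  by_cases h0 : ν' Set.univ = 0
  · have hν : ν' = 0 := Measure.measure_univ_eq_zero.mp h0
    subst hν
    simp [lqNorm, pot, hq, ENNReal.zero_rpow_of_pos,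
      (by positivity : (0:ℝ) < 1 / q)]
  · have hfin : ν' Set.univ ≠ ∞ := measure_ne_top _ _
    rw [← ENNReal.div_le_iff_le_mul (Or.inl h0) (Or.inl hfin)]
    refine le_sInf fun C hC => ?_
    rw [ENNReal.div_le_iff_le_mul (Or.inl h0) (Or.inl hfin)]
    exact hC ν' inferInstance

lemma aux_kappa_mono (G : Ω → Ω → ℝ≥0∞) {q : ℝ} (hq : 0 < q) (σ : Measure Ω) (x : Ω) :
    Monotone fun r : ℝ => kappa G q (σ.restrict (ball G x r)) := by
  intro r r' h
  refine sInf_le_sInf fun C hC ν' hν' => ?_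
  refine le_trans ?_ (hC ν' hν')
  exact ENNReal.rpow_le_rpow
    (lintegral_mono' (Measure.restrict_mono (aux_ball_mono G x h) le_rfl) le_rfl)
    (by positivity)

lemma aux_potlayer (G : Ω → Ω → ℝ≥0∞) (x : Ω) {c : ℝ} (hc : 0 < c)
    (μ : Measure Ω) [SigmaFinite μ] (hGx : Measurable (G x)) :
    ∫⁻ r in Ioi (0:ℝ), μ (ball G x (c * r)) * (ENNReal.ofReal (r ^ 2))⁻¹
      = ENNReal.ofReal c * pot G μ x := by
  set S : ℝ × Ω → ℝ≥0∞ := fun p =>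
    {p' : ℝ × Ω | (G x p'.2)⁻¹ < ENNReal.ofReal (c * p'.1)}.indicator
      (fun p' => (ENNReal.ofReal (p'.1 ^ 2))⁻¹) p with hS
  have hSmeas : Measurable S := by
    refine Measurable.indicator ?_ ?_
    · exact (ENNReal.measurable_ofReal.comp ((measurable_fst.pow measurable_const))).inv
    · exact measurableSet_lt (hGx.comp measurable_snd).inv
        (ENNReal.measurable_ofReal.comp (measurable_const.mul measurable_fst))
  have h1 : ∀ r : ℝ, μ (ball G x (c * r)) * (ENNReal.ofReal (r ^ 2))⁻¹
      = ∫⁻ z, S (r, z) ∂μ := by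
    intro r
    have : ∀ z, S (r, z) = (ball G x (c * r)).indicator
        (fun _ => (ENNReal.ofReal (r ^ 2))⁻¹) z := by
      intro z
      simp only [hS, Set.indicator_apply, mem_setOf_eq, ball]
    simp_rw [this]
    rw [lintegral_indicator_const (aux_ball_measurable x hGx _), mul_comm]
  have h2 : ∀ z, (∫⁻ r in Ioi (0:ℝ), S (r, z)) = ENNReal.ofReal c * G x z := by
    intro z
    have : ∀ r : ℝ, S (r, z) = {r' : ℝ | (G x z)⁻¹ < ENNReal.ofReal (c * r')}.indicator
        (fun r => (ENNReal.ofReal (r ^ 2))⁻¹) r := by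
      intro r
      simp only [hS, Set.indicator_apply, mem_setOf_eq]
    simp_rw [this]
    exact aux_layer hc (G x z)
  calc ∫⁻ r in Ioi (0:ℝ), μ (ball G x (c * r)) * (ENNReal.ofReal (r ^ 2))⁻¹
      = ∫⁻ r in Ioi (0:ℝ), ∫⁻ z, S (r, z) ∂μ := lintegral_congr h1
    _ = ∫⁻ z, (∫⁻ r in Ioi (0:ℝ), S (r, z)) ∂μ :=
        lintegral_lintegral_swap hSmeas.aemeasurable
    _ = ∫⁻ z, ENNReal.ofReal c * G x z ∂μ := lintegral_congr h2
    _ = ENNReal.ofReal c * pot G μ x := lintegral_const_mul _ hGx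

end Aux

/-- the key estimate
`G[(Gν)^q dσ](x) ≤ (2κ)^q (Gν(x))^q [Gσ(x) + (Kσ(x))^{1-q}]` for quasi-metric kernels. -/
theorem statement12 [LocallyCompactSpace Ω] [T2Space Ω] [SecondCountableTopology Ω]
    [BorelSpace Ω] (G : Ω → Ω → ℝ≥0∞) (κ q : ℝ) (hq0 : 0 < q) (hq1 : q < 1)
    (ν σ : Measure Ω) [IsLocallyFiniteMeasure ν] [IsLocallyFiniteMeasure σ]
    (hG : IsQuasiMetricKernel G κ) :
    ∀ x : Ω, potF G σ (fun y => pot G ν y ^ q) x ≤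
      ENNReal.ofReal ((2 * κ) ^ q) * pot G ν x ^ q *
        (pot G σ x + kpot G q σ x ^ (1 - q)) := by
  obtain ⟨hGk, hκ2, hGpos, hGsym, hGtri⟩ := hG
  have hκpos : (0:ℝ) < κ := lt_of_lt_of_le (by norm_num) hκ2
  have h2κ : (0:ℝ) < 2 * κ := by linarith
  have hGm : Measurable (Function.uncurry G) := hGk.measurable
  set c : ℝ≥0∞ := ENNReal.ofReal (2 * κ) with hcdef
  have hc0 : c ≠ 0 := (ENNReal.ofReal_pos.mpr h2κ).ne'
  have hct : c ≠ ∞ := ENNReal.ofReal_ne_top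
  have h1q : (0:ℝ) < 1 - q := by linarith
  have hofr2 : c = 2 * ENNReal.ofReal κ := by
    rw [hcdef, ENNReal.ofReal_mul (by norm_num : (0:ℝ) ≤ 2)]
    norm_num
  intro x
  have hGx : Measurable (G x) := hGm.comp measurable_prodMk_left
  have hmin : ∀ y z, G y z ≤ G x y → G y z ≤ c * G x z := by
    intro y z h
    have h2 : (G x z)⁻¹ ≤ c * (G y z)⁻¹ := by
      calc (G x z)⁻¹ ≤ ENNReal.ofReal κ * ((G x y)⁻¹ + (G y z)⁻¹) := hGtri x z y
        _ ≤ ENNReal.ofReal κ * ((G y z)⁻¹ + (G y z)⁻¹) := by gcongr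
        _ = c * (G y z)⁻¹ := by rw [hofr2]; ring
    have h3 : c⁻¹ * G y z ≤ G x z := by
      have h4 := ENNReal.inv_le_inv' h2
      rwa [ENNReal.mul_inv (Or.inl hc0) (Or.inl hct), inv_inv, inv_inv] at h4
    calc G y z = c * (c⁻¹ * G y z) := by
          rw [← mul_assoc, ENNReal.mul_inv_cancel hc0 hct, one_mul]
      _ ≤ c * G x z := by gcongr
  have hball : ∀ (r : ℝ) y z, y ∈ ball G x r → G x y < G y z → z ∈ ball G x (2 * κ * r) := by
    intro r y z hy hz
    have h2 : (G x z)⁻¹ ≤ c * (G x y)⁻¹ := by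
      calc (G x z)⁻¹ ≤ ENNReal.ofReal κ * ((G x y)⁻¹ + (G y z)⁻¹) := hGtri x z y
        _ ≤ ENNReal.ofReal κ * ((G x y)⁻¹ + (G x y)⁻¹) := by
            have := hz.le
            gcongr
        _ = c * (G x y)⁻¹ := by rw [hofr2]; ring
    have h5 : (G x z)⁻¹ < c * ENNReal.ofReal r :=
      lt_of_le_of_lt h2 ((ENNReal.mul_lt_mul_iff_right hc0 hct).mpr hy)
    have he : c * ENNReal.ofReal r = ENNReal.ofReal (2 * κ * r) := by
      rw [hcdef, ← ENNReal.ofReal_mul h2κ.le]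
    exact show (G x z)⁻¹ < ENNReal.ofReal (2 * κ * r) from he ▸ h5
  by_cases hatop : pot G ν x = ∞
  · by_cases hσ0 : σ = 0
    · simp [potF, hσ0]
    · have hsupp : Function.support (G x) = Set.univ :=
        Set.eq_univ_of_forall fun y => (hGpos x y).ne'
      have hP : 0 < pot G σ x := by
        rw [show pot G σ x = ∫⁻ y, G x y ∂σ from rfl, lintegral_pos_iff_support hGx, hsupp]
        exact Measure.measure_univ_pos.mpr hσ0
      have hne : pot G σ x + kpot G q σ x ^ (1 - q) ≠ 0 := (lt_of_lt_of_le hP le_self_add).ne'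
      rw [hatop, ENNReal.top_rpow_of_pos hq0,
        ENNReal.mul_top (ENNReal.ofReal_pos.mpr (Real.rpow_pos_of_pos h2κ q)).ne',
        ENNReal.top_mul hne]
      exact le_top
  · set a := pot G ν x with hadef
    set ψ : Ω → ℝ≥0∞ := fun y => ∫⁻ z in {z | G x y < G y z}, G y z ∂ν with hψdef
    have hsetm : ∀ y : Ω, MeasurableSet {z | G x y < G y z} := fun y =>
      measurableSet_lt measurable_const (hGm.comp measurable_prodMk_left)
    have hψm : Measurable ψ := by
      have heq : ψ = fun y => ∫⁻ z, ({p : Ω × Ω | G x p.1 < Function.uncurry G p}.indicator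
          (Function.uncurry G)) (y, z) ∂ν := by
        funext y
        show (∫⁻ z in {z | G x y < G y z}, G y z ∂ν) = _
        rw [← lintegral_indicator (hsetm y)]
        exact lintegral_congr fun z => by
          simp [Set.indicator_apply, Function.uncurry, Set.mem_setOf_eq]
      rw [heq]
      exact Measurable.lintegral_prod_right'
        (hGm.indicator (measurableSet_lt (hGx.comp measurable_fst) hGm))
    have hpoint : ∀ y, G x y * pot G ν y ^ q ≤ G x y * (c * a) ^ q + G x y * ψ y ^ q := by
      intro y
      have hsplit : pot G ν y = ψ y + ∫⁻ z in {z | G x y < G y z}ᶜ, G y z ∂ν :=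
        (lintegral_add_compl (G y) (hsetm y)).symm
      have hcomp : (∫⁻ z in {z | G x y < G y z}ᶜ, G y z ∂ν) ≤ c * a := by
        calc (∫⁻ z in {z | G x y < G y z}ᶜ, G y z ∂ν)
            ≤ ∫⁻ z in {z | G x y < G y z}ᶜ, c * G x z ∂ν := by
              refine setLIntegral_mono (measurable_const.mul hGx) fun z hz => ?_
              exact hmin y z (not_lt.mp hz)
          _ ≤ ∫⁻ z, c * G x z ∂ν := lintegral_mono' Measure.restrict_le_self le_rfl
          _ = c * a := lintegral_const_mul _ hGx
      calc G x y * pot G ν y ^ q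
          = G x y * (ψ y + ∫⁻ z in {z | G x y < G y z}ᶜ, G y z ∂ν) ^ q := by rw [← hsplit]
        _ ≤ G x y * (ψ y ^ q + (∫⁻ z in {z | G x y < G y z}ᶜ, G y z ∂ν) ^ q) :=
            mul_le_mul_right (ENNReal.rpow_add_le_add_rpow _ _ hq0.le hq1.le) _
        _ = G x y * ψ y ^ q + G x y * (∫⁻ z in {z | G x y < G y z}ᶜ, G y z ∂ν) ^ q := by ring
        _ ≤ G x y * ψ y ^ q + G x y * (c * a) ^ q := by gcongr
        _ = G x y * (c * a) ^ q + G x y * ψ y ^ q := by ring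
    have hstep1 : potF G σ (fun y => pot G ν y ^ q) x ≤
        pot G σ x * (c * a) ^ q + ∫⁻ y, G x y * ψ y ^ q ∂σ := by
      calc potF G σ (fun y => pot G ν y ^ q) x
          ≤ ∫⁻ y, (G x y * (c * a) ^ q + G x y * ψ y ^ q) ∂σ := lintegral_mono hpoint
        _ = (∫⁻ y, G x y * (c * a) ^ q ∂σ) + ∫⁻ y, G x y * ψ y ^ q ∂σ :=
            lintegral_add_left (hGx.mul measurable_const) _
        _ = pot G σ x * (c * a) ^ q + ∫⁻ y, G x y * ψ y ^ q ∂σ := by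
            rw [lintegral_mul_const _ hGx]; rfl
    set w : ℝ → ℝ≥0∞ := fun r => (ENNReal.ofReal (r ^ 2))⁻¹ with hwdef
    have hwm : Measurable w :=
      (ENNReal.measurable_ofReal.comp (measurable_id.pow measurable_const)).inv
    set K : ℝ → ℝ≥0∞ := fun r => kappa G q (σ.restrict (ball G x r)) with hKdef
    have hKm : Measurable K := (aux_kappa_mono G hq0 σ x).measurable
    set N : ℝ → ℝ≥0∞ := fun r => ν (ball G x (2 * κ * r)) with hNdef
    have hNm : Measurable N := by
      have hmono : Monotone N := fun r r' h =>
        measure_mono (aux_ball_mono G x (by nlinarith))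
      exact hmono.measurable
    set Φ : Ω × ℝ → ℝ≥0∞ := fun p =>
      ({p' : Ω × ℝ | (G x p'.1)⁻¹ < ENNReal.ofReal p'.2}.indicator (fun p' => w p'.2) p) *
        ψ p.1 ^ q with hΦdef
    have hΦm : Measurable Φ := by
      refine Measurable.mul ?_ ((hψm.comp measurable_fst).pow measurable_const)
      exact (hwm.comp measurable_snd).indicator
        (measurableSet_lt (hGx.comp measurable_fst).inv
          (ENNReal.measurable_ofReal.comp measurable_snd))
    have hII : (∫⁻ y, G x y * ψ y ^ q ∂σ) = ∫⁻ r in Ioi (0:ℝ), ∫⁻ y, Φ (y, r) ∂σ := by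
      have h1 : ∀ y, G x y * ψ y ^ q = ∫⁻ r in Ioi (0:ℝ), Φ (y, r) := by
        intro y
        have hl := aux_layer one_pos (G x y)
        rw [ENNReal.ofReal_one, one_mul] at hl
        simp only [one_mul] at hl
        calc G x y * ψ y ^ q
            = (∫⁻ r in Ioi (0:ℝ),
                {r' : ℝ | (G x y)⁻¹ < ENNReal.ofReal r'}.indicator w r) * ψ y ^ q := by
              rw [hl]
          _ = ∫⁻ r in Ioi (0:ℝ),
                ({r' : ℝ | (G x y)⁻¹ < ENNReal.ofReal r'}.indicator w r) * ψ y ^ q :=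
              (lintegral_mul_const _ (hwm.indicator
                (measurableSet_lt measurable_const ENNReal.measurable_ofReal))).symm
          _ = ∫⁻ r in Ioi (0:ℝ), Φ (y, r) := by
              refine lintegral_congr fun r => ?_
              simp only [hΦdef, Set.indicator_apply, mem_setOf_eq]
      rw [lintegral_congr h1]
      exact lintegral_lintegral_swap hΦm.aemeasurable
    have hinner : ∀ r ∈ Ioi (0:ℝ), (∫⁻ y, Φ (y, r) ∂σ) ≤ K r ^ q * N r ^ q * w r := by
      intro r hr
      have hrpos : (0:ℝ) < r := hr
      have h1 : ∀ y, Φ (y, r) = (ball G x r).indicator (fun y => w r * ψ y ^ q) y := by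
        intro y
        simp only [hΦdef, Set.indicator_apply, mem_setOf_eq, ball, ite_mul, zero_mul]
      set B' := ball G x (2 * κ * r) with hB'def
      have hs0 : ENNReal.ofReal (2 * κ * r) ≠ 0 :=
        (ENNReal.ofReal_pos.mpr (by positivity)).ne'
      have hνB' : ν B' ≤ ENNReal.ofReal (2 * κ * r) * a := by
        have hsub : B' ⊆ {z | (ENNReal.ofReal (2 * κ * r))⁻¹ ≤ G x z} := fun z hz => by
          have h6 := ENNReal.inv_le_inv' (le_of_lt hz)
          rwa [inv_inv] at h6
        have hm := mul_meas_ge_le_lintegral (μ := ν) hGx ((ENNReal.ofReal (2 * κ * r))⁻¹)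
        have h5 : (ENNReal.ofReal (2 * κ * r))⁻¹ * ν B' ≤ a :=
          le_trans (mul_le_mul_right (measure_mono hsub) _) hm
        calc ν B' = ENNReal.ofReal (2 * κ * r) * ((ENNReal.ofReal (2 * κ * r))⁻¹ * ν B') := by
              rw [← mul_assoc, ENNReal.mul_inv_cancel hs0 ENNReal.ofReal_ne_top, one_mul]
          _ ≤ ENNReal.ofReal (2 * κ * r) * a := by gcongr
      haveI hfinB' : IsFiniteMeasure (ν.restrict B') := by
        constructor
        rw [Measure.restrict_apply_univ]
        exact lt_of_le_of_lt hνB'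
          (ENNReal.mul_lt_top ENNReal.ofReal_lt_top (lt_top_iff_ne_top.mpr hatop))
      have hψle : ∀ y ∈ ball G x r, ψ y ≤ pot G (ν.restrict B') y := by
        intro y hy
        exact lintegral_mono_set fun z hz => hball r y z hy hz
      have hpotm : Measurable (pot G (ν.restrict B')) :=
        Measurable.lintegral_prod_right' (f := Function.uncurry G) hGm
      have hlq : (∫⁻ y in ball G x r, ψ y ^ q ∂σ) ≤ K r ^ q * N r ^ q := by
        have hq_inv : ∀ T : ℝ≥0∞, (T ^ (1 / q)) ^ q = T := fun T => by
          rw [← ENNReal.rpow_mul, one_div, inv_mul_cancel₀ hq0.ne', ENNReal.rpow_one]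
        calc (∫⁻ y in ball G x r, ψ y ^ q ∂σ)
            ≤ ∫⁻ y in ball G x r, pot G (ν.restrict B') y ^ q ∂σ :=
              setLIntegral_mono (hpotm.pow measurable_const) fun y hy =>
                ENNReal.rpow_le_rpow (hψle y hy) hq0.le
          _ = lqNorm q (σ.restrict (ball G x r)) (pot G (ν.restrict B')) ^ q :=
              (hq_inv _).symm
          _ ≤ (kappa G q (σ.restrict (ball G x r)) * (ν.restrict B') Set.univ) ^ q :=
              ENNReal.rpow_le_rpow (aux_le_kappa hq0 _ _) hq0.le
          _ = K r ^ q * N r ^ q := by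
              rw [Measure.restrict_apply_univ, ENNReal.mul_rpow_of_nonneg _ _ hq0.le]
      calc (∫⁻ y, Φ (y, r) ∂σ)
          = w r * ∫⁻ y in ball G x r, ψ y ^ q ∂σ := by
            rw [lintegral_congr h1, lintegral_indicator (aux_ball_measurable x hGx r),
              lintegral_const_mul _ (hψm.pow measurable_const)]
        _ ≤ w r * (K r ^ q * N r ^ q) := by gcongr
        _ = K r ^ q * N r ^ q * w r := by ring
    have hpq : Real.HolderConjugate (1 - q)⁻¹ q⁻¹ := by
      constructor
      · rw [inv_inv, inv_inv, inv_one]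
        ring
      · exact inv_pos.mpr h1q
      · exact inv_pos.mpr hq0
    have hholder : (∫⁻ r in Ioi (0:ℝ), K r ^ q * N r ^ q * w r) ≤
        kpot G q σ x ^ (1 - q) * (c * a) ^ q := by
      have hfg : ∀ᵐ r ∂(volume.restrict (Ioi (0:ℝ))),
          K r ^ q * N r ^ q * w r =
            ((fun r => K r ^ q * w r ^ (1 - q)) * fun r => N r ^ q * w r ^ q) r := by
        refine (ae_restrict_mem measurableSet_Ioi).mono fun r hr => ?_
        have hrpos : (0:ℝ) < r := hr
        have hw0 : w r ≠ 0 := ENNReal.inv_ne_zero.mpr ENNReal.ofReal_ne_top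
        have hwt : w r ≠ ∞ := ENNReal.inv_ne_top.mpr (ENNReal.ofReal_pos.mpr (by positivity)).ne'
        have hww : w r ^ (1 - q) * w r ^ q = w r := by
          rw [← ENNReal.rpow_add _ _ hw0 hwt, sub_add_cancel, ENNReal.rpow_one]
        rw [Pi.mul_apply, mul_mul_mul_comm, hww]
      rw [lintegral_congr_ae hfg]
      refine le_trans (ENNReal.lintegral_mul_le_Lp_mul_Lq (volume.restrict (Ioi (0:ℝ))) hpq
        (((hKm.pow measurable_const).mul (hwm.pow measurable_const)).aemeasurable)
        (((hNm.pow measurable_const).mul (hwm.pow measurable_const)).aemeasurable)) ?_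
      have e1 : (∫⁻ r in Ioi (0:ℝ), (K r ^ q * w r ^ (1 - q)) ^ (1 - q)⁻¹) ^ (1 / (1 - q)⁻¹)
          = kpot G q σ x ^ (1 - q) := by
        have h7 : ∀ r : ℝ, (K r ^ q * w r ^ (1 - q)) ^ (1 - q)⁻¹ = K r ^ (q / (1 - q)) * w r := by
          intro r
          rw [ENNReal.mul_rpow_of_nonneg _ _ (by positivity), ← ENNReal.rpow_mul,
            ← ENNReal.rpow_mul, mul_inv_cancel₀ h1q.ne', ENNReal.rpow_one, div_eq_mul_inv]
        simp_rw [h7]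
        rw [one_div, inv_inv]
        congr 1
      have e2 : (∫⁻ r in Ioi (0:ℝ), (N r ^ q * w r ^ q) ^ q⁻¹) ^ (1 / q⁻¹) = (c * a) ^ q := by
        have h8 : ∀ r : ℝ, (N r ^ q * w r ^ q) ^ q⁻¹ = N r * w r := by
          intro r
          rw [ENNReal.mul_rpow_of_nonneg _ _ (by positivity), ← ENNReal.rpow_mul,
            ← ENNReal.rpow_mul, mul_inv_cancel₀ hq0.ne', ENNReal.rpow_one, ENNReal.rpow_one]
        simp_rw [h8]
        rw [one_div, inv_inv]
        congr 1
        exact aux_potlayer G x h2κ ν hGx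
      rw [e1, e2]
    calc potF G σ (fun y => pot G ν y ^ q) x
        ≤ pot G σ x * (c * a) ^ q + ∫⁻ y, G x y * ψ y ^ q ∂σ := hstep1
      _ ≤ pot G σ x * (c * a) ^ q + kpot G q σ x ^ (1 - q) * (c * a) ^ q := by
          gcongr
          rw [hII]
          refine le_trans ?_ hholder
          refine setLIntegral_mono (((hKm.pow measurable_const).mul
            (hNm.pow measurable_const)).mul hwm) hinner
      _ = (c * a) ^ q * (pot G σ x + kpot G q σ x ^ (1 - q)) := by ring
      _ = ENNReal.ofReal ((2 * κ) ^ q) * a ^ q * (pot G σ x + kpot G q σ x ^ (1 - q)) := by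
          rw [ENNReal.mul_rpow_of_nonneg _ _ hq0.le, hcdef, ENNReal.ofReal_rpow_of_pos h2κ]

end NPE
end
end

section
/- Let Ω be a set and d : Ω × Ω → (0, +∞] a symmetric function satisfying the quasi-triangle inequality d(x,y) ≤ κ[d(x,z) + d(z,y)] for all x,y,z ∈ Ω, with constant κ ≥ 1/2. Then Ptolemy's inequality holds: for all x₀, x, y, z ∈ Ω, d(x,y)·d(x₀,z) ≤ 4κ²[d(x,z)·d(y,x₀) + d(x₀,x)·d(z,y)]. -/
open MeasureTheory ENNReal Set

noncomputable section

namespace NPE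

variable {Ω : Type*} [TopologicalSpace Ω] [MeasurableSpace Ω]

/-- Ptolemy's inequality for quasi-metrics. -/
theorem statement17 {X : Type*} [Nonempty X] (d : X → X → ℝ≥0∞) (κ : ℝ)
    (hκ : (1 / 2 : ℝ) ≤ κ) (hpos : ∀ x y, 0 < d x y) (hsymm : ∀ x y, d x y = d y x)
    (htri : ∀ x y z, d x y ≤ ENNReal.ofReal κ * (d x z + d z y)) :
    ∀ x₀ x y z : X, d x y * d x₀ z ≤
      ENNReal.ofReal (4 * κ ^ 2) * (d x z * d y x₀ + d x₀ x * d z y) := by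
  intro x₀ x y z
  set a := d x z with ha
  set b := d z y with hb
  set c := d x₀ x with hc
  set e := d y x₀ with he
  have hκ0 : (0 : ℝ) ≤ κ := by linarith
  have two : ∀ t : ℝ≥0∞, ENNReal.ofReal κ * (t + t) = ENNReal.ofReal (2 * κ) * t := by
    intro t
    rw [ENNReal.ofReal_mul (by norm_num : (0:ℝ) ≤ 2), ENNReal.ofReal_ofNat, ← two_mul]
    ring_nf
  -- the four triangle inequalities
  have h1 : d x y ≤ ENNReal.ofReal κ * (a + b) := htri x y z
  have h2 : d x y ≤ ENNReal.ofReal κ * (c + e) := by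
    have := htri x y x₀
    rwa [hsymm x x₀, hsymm x₀ y] at this
  have h3 : d x₀ z ≤ ENNReal.ofReal κ * (c + a) := htri x₀ z x
  have h4 : d x₀ z ≤ ENNReal.ofReal κ * (e + b) := by
    have := htri x₀ z y
    rwa [hsymm x₀ y, hsymm y z] at this
  -- derived bounds
  have bd : ∀ {s t : ℝ≥0∞} {w : ℝ≥0∞}, w ≤ ENNReal.ofReal κ * (s + t) → s ≤ t →
      w ≤ ENNReal.ofReal (2 * κ) * t := by
    intro s t w hw hst
    calc w ≤ ENNReal.ofReal κ * (s + t) := hw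
      _ ≤ ENNReal.ofReal κ * (t + t) := mul_le_mul_right (add_le_add_left hst t) _
      _ = ENNReal.ofReal (2 * κ) * t := two t
  have bd' : ∀ {s t : ℝ≥0∞} {w : ℝ≥0∞}, w ≤ ENNReal.ofReal κ * (s + t) → t ≤ s →
      w ≤ ENNReal.ofReal (2 * κ) * s := by
    intro s t w hw hst
    rw [add_comm] at hw
    exact bd hw hst
  -- the main combination step
  have main : ∀ p q : ℝ≥0∞, d x y ≤ ENNReal.ofReal (2 * κ) * p →
      d x₀ z ≤ ENNReal.ofReal (2 * κ) * q → p * q ≤ a * e + c * b →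
      d x y * d x₀ z ≤ ENNReal.ofReal (4 * κ ^ 2) * (a * e + c * b) := by
    intro p q hp hq hpq
    calc d x y * d x₀ z ≤ (ENNReal.ofReal (2 * κ) * p) * (ENNReal.ofReal (2 * κ) * q) :=
          mul_le_mul' hp hq
      _ = (ENNReal.ofReal (2 * κ) * ENNReal.ofReal (2 * κ)) * (p * q) := by ring
      _ = ENNReal.ofReal (4 * κ ^ 2) * (p * q) := by
          rw [← ENNReal.ofReal_mul (by linarith : (0:ℝ) ≤ 2 * κ)]
          congr 1
          ring
      _ ≤ _ := mul_le_mul_right hpq _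
  rcases le_total a b with hab | hab
  · rcases le_total a c with hac | hac
    · -- a ≤ b, a ≤ c : use  d(x,y) ≤ 2κ b,  d(x₀,z) ≤ 2κ c
      exact main b c (bd h1 hab) (bd' h3 hac) (by rw [mul_comm]; exact le_add_self)
    · -- c ≤ a ≤ b
      rcases le_total c e with hce | hce
      · -- c ≤ e : d(x,y) ≤ 2κ e, d(x₀,z) ≤ 2κ a
        exact main e a (bd h2 hce) (bd h3 hac) (by rw [mul_comm]; exact le_self_add)
      · -- e ≤ c ≤ a ≤ b : d(x,y) ≤ 2κ c, d(x₀,z) ≤ 2κ b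
        exact main c b (bd' h2 hce) (bd h4 (hce.trans (hac.trans hab))) le_add_self
  · rcases le_total b e with hbe | hbe
    · -- b ≤ a, b ≤ e : d(x,y) ≤ 2κ a, d(x₀,z) ≤ 2κ e
      exact main a e (bd' h1 hab) (bd' h4 hbe) le_self_add
    · -- e ≤ b ≤ a
      rcases le_total e c with hec | hec
      · -- e ≤ c : d(x,y) ≤ 2κ c, d(x₀,z) ≤ 2κ b
        exact main c b (bd' h2 hec) (bd h4 hbe) le_add_self
      · -- c ≤ e ≤ b ≤ a : d(x,y) ≤ 2κ e, d(x₀,z) ≤ 2κ a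
        exact main e a (bd h2 hec) (bd h3 (hec.trans (hbe.trans hab)))
          (by rw [mul_comm]; exact le_self_add)

end NPE
end
end
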